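/- Suppose σ > 0, L ≥ 1, and for ℓ = 1,…,L let fℓ > 0 and mℓ⁻¹ ≥ 0 be constants. Let μ be the rotation-invariant probability measure on the unit sphere S^{d−1} ⊂ ℝ^d with d ≥ 2, and fix a unit vector k̂. If for all x ≥ 0, ∑ℓ fℓ = ∑ℓ fℓ ∫_{S^{d−1}} exp(x²(1 − (mℓ⁻¹/σ²)(P̂·k̂)²)) dμ(P̂), then a contradiction follows; i.e., no such constants exist. Equivalently: for d ≥ 2 the identity ∑ℓ fℓ = ∑ℓ fℓ ∫ e^{x²(1 − aℓ (P̂·k̂)²)} dμ(P̂) with aℓ = mℓ⁻¹/σ² ≥ 0 cannot hold for all x ≥ 0, since the set {P̂ : 1 − aℓ(P̂·k̂)² > 0} has positive measure, making the right side tend to ∞ as x → ∞. -/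

import Mathlib

open MeasureTheory Filter Topology

/-- A linear isometric equivalence of Euclidean space maps the unit sphere to itself. -/
noncomputable def sphereMap {d : ℕ}
    (R : EuclideanSpace ℝ (Fin d) ≃ₗᵢ[ℝ] EuclideanSpace ℝ (Fin d))
    (x : Metric.sphere (0 : EuclideanSpace ℝ (Fin d)) 1) :
    Metric.sphere (0 : EuclideanSpace ℝ (Fin d)) 1 :=
  ⟨R x, by
    have hx : ‖(x : EuclideanSpace ℝ (Fin d))‖ = 1 :=
      mem_sphere_zero_iff_norm.mp x.2
    exact mem_sphere_zero_iff_norm.mpr (by rw [R.norm_map]; exact hx)⟩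

lemma sphereMap_continuous {d : ℕ}
    (R : EuclideanSpace ℝ (Fin d) ≃ₗᵢ[ℝ] EuclideanSpace ℝ (Fin d)) :
    Continuous (sphereMap R) := by
  apply Continuous.subtype_mk
  exact R.continuous.comp continuous_subtype_val

/-- Any nonempty open subset of the sphere has positive measure for a
rotation-invariant measure. -/
lemma open_pos {d : ℕ} (hd : 2 ≤ d)
    (μ : Measure (Metric.sphere (0 : EuclideanSpace ℝ (Fin d)) 1))
    [IsProbabilityMeasure μ]
    (hinv : ∀ R : EuclideanSpace ℝ (Fin d) ≃ₗᵢ[ℝ] EuclideanSpace ℝ (Fin d),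
      Measure.map (sphereMap R) μ = μ)
    (U : Set (Metric.sphere (0 : EuclideanSpace ℝ (Fin d)) 1))
    (hU : IsOpen U) (hne : U.Nonempty) : 0 < μ U := by
  rcases hne with ⟨p, hp⟩
  by_contra h
  push_neg at h
  have hU0 : μ U = 0 := le_antisymm (le_of_not_gt (by simpa using h)) (zero_le)
  -- for each q, a rotation taking p to q
  have hRq : ∀ q : Metric.sphere (0 : EuclideanSpace ℝ (Fin d)) 1,
      ∃ R : EuclideanSpace ℝ (Fin d) ≃ₗᵢ[ℝ] EuclideanSpace ℝ (Fin d),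
        R (p : EuclideanSpace ℝ (Fin d)) = (q : EuclideanSpace ℝ (Fin d)) := by
    intro q
    refine ⟨Submodule.reflection (ℝ ∙ ((p : EuclideanSpace ℝ (Fin d)) - q))ᗮ, ?_⟩
    exact Submodule.reflection_sub (by
      rw [mem_sphere_zero_iff_norm.mp p.2, mem_sphere_zero_iff_norm.mp q.2])
  choose R hR using hRq
  set W : Metric.sphere (0 : EuclideanSpace ℝ (Fin d)) 1 →
      Set (Metric.sphere (0 : EuclideanSpace ℝ (Fin d)) 1) :=
    fun q => (sphereMap (R q).symm) ⁻¹' U with hW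
  have hWopen : ∀ q, IsOpen (W q) := fun q =>
    hU.preimage (sphereMap_continuous _)
  have hWmem : ∀ q, q ∈ W q := by
    intro q
    have : sphereMap (R q).symm q = p := by
      apply Subtype.ext
      show (R q).symm (q : EuclideanSpace ℝ (Fin d)) = (p : EuclideanSpace ℝ (Fin d))
      rw [← hR q]
      exact (R q).symm_apply_apply _
    simpa [W, this] using hp
  have hWzero : ∀ q, μ (W q) = 0 := by
    intro q
    have := hinv (R q).symm
    have hmeas : Measurable (sphereMap (R q).symm) := (sphereMap_continuous _).measurable
    calc μ (W q) = (Measure.map (sphereMap (R q).symm) μ) U := by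
          rw [Measure.map_apply hmeas hU.measurableSet]
      _ = μ U := by rw [this]
      _ = 0 := hU0
  -- compactness
  have hcomp : IsCompact (Set.univ : Set (Metric.sphere (0 : EuclideanSpace ℝ (Fin d)) 1)) :=
    isCompact_univ
  obtain ⟨t, ht⟩ := hcomp.elim_finite_subcover W hWopen (fun q _ => Set.mem_iUnion.mpr ⟨q, hWmem q⟩)
  have : (1 : ENNReal) ≤ 0 := by
    calc (1 : ENNReal) = μ Set.univ := (measure_univ).symm
      _ ≤ μ (⋃ q ∈ t, W q) := measure_mono ht
      _ ≤ ∑ q ∈ t, μ (W q) := measure_biUnion_finset_le t W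
      _ = 0 := by simp [hWzero]
  simp at this

theorem stmt_5 {d L : ℕ} (hd : 2 ≤ d) (hL : 1 ≤ L)
    (σ : ℝ) (hσ : 0 < σ)
    (f minv : Fin L → ℝ) (hf : ∀ ℓ, 0 < f ℓ) (hm : ∀ ℓ, 0 ≤ minv ℓ)
    (μ : Measure (Metric.sphere (0 : EuclideanSpace ℝ (Fin d)) 1))
    [IsProbabilityMeasure μ]
    (hinv : ∀ R : EuclideanSpace ℝ (Fin d) ≃ₗᵢ[ℝ] EuclideanSpace ℝ (Fin d),
      Measure.map (sphereMap R) μ = μ)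
    (khat : EuclideanSpace ℝ (Fin d)) (hk : ‖khat‖ = 1) :
    ¬ (∀ x : ℝ, 0 ≤ x →
        (∑ ℓ, f ℓ) =
          ∑ ℓ, f ℓ * ∫ Phat, Real.exp (x ^ 2 *
            (1 - (minv ℓ / σ ^ 2) *
              (inner ℝ ((Phat : Metric.sphere (0 : EuclideanSpace ℝ (Fin d)) 1) :
                EuclideanSpace ℝ (Fin d)) khat : ℝ) ^ 2)) ∂μ) := by
  intro h
  haveI : NeZero L := ⟨by omega⟩
  set ℓ₀ : Fin L := ⟨0, by omega⟩ with hℓ₀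
  set a : ℝ := minv ℓ₀ / σ ^ 2 with ha
  have ha0 : 0 ≤ a := div_nonneg (hm ℓ₀) (by positivity)
  -- a unit vector orthogonal to khat
  have hkne : khat ≠ 0 := by intro h0; rw [h0, norm_zero] at hk; norm_num at hk
  obtain ⟨w, hw_mem, hw_ne⟩ :
      ∃ w : EuclideanSpace ℝ (Fin d), w ∈ (ℝ ∙ khat)ᗮ ∧ w ≠ 0 := by
    have h1 : Module.finrank ℝ (ℝ ∙ khat) = 1 := finrank_span_singleton hkne
    have h2 : Module.finrank ℝ (ℝ ∙ khat) + Module.finrank ℝ (ℝ ∙ khat)ᗮ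
        = Module.finrank ℝ (EuclideanSpace ℝ (Fin d)) :=
      Submodule.finrank_add_finrank_orthogonal _
    rw [h1, finrank_euclideanSpace_fin] at h2
    have hpos : 0 < Module.finrank ℝ (ℝ ∙ khat)ᗮ := by omega
    obtain ⟨y, hyne⟩ := Module.finrank_pos_iff_exists_ne_zero.mp hpos
    exact ⟨y, y.2, fun h0 => hyne (Subtype.ext h0)⟩
  set v : EuclideanSpace ℝ (Fin d) := ‖w‖⁻¹ • w with hv
  have hv_norm : ‖v‖ = 1 := by
    rw [hv, norm_smul, norm_inv, norm_norm, inv_mul_cancel₀ (norm_ne_zero_iff.mpr hw_ne)]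
  have hv_inner : (inner ℝ v khat : ℝ) = 0 := by
    have h0 : (inner ℝ khat w : ℝ) = 0 :=
      hw_mem khat (Submodule.mem_span_singleton_self khat)
    rw [hv, real_inner_smul_left, ← real_inner_comm, h0, mul_zero]
  -- the open set
  set U : Set (Metric.sphere (0 : EuclideanSpace ℝ (Fin d)) 1) :=
    {P | a * (inner ℝ (P : EuclideanSpace ℝ (Fin d)) khat : ℝ) ^ 2 < 1/2} with hUdef
  have hUopen : IsOpen U := by
    have hcont : Continuous (fun P : Metric.sphere (0 : EuclideanSpace ℝ (Fin d)) 1 =>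
        a * (inner ℝ (P : EuclideanSpace ℝ (Fin d)) khat : ℝ) ^ 2) := by
      apply Continuous.mul continuous_const
      apply Continuous.pow
      exact (continuous_subtype_val.inner continuous_const)
    exact isOpen_lt hcont continuous_const
  have hUne : U.Nonempty := by
    refine ⟨⟨v, mem_sphere_zero_iff_norm.mpr hv_norm⟩, ?_⟩
    simp only [hUdef, Set.mem_setOf_eq, hv_inner]
    norm_num
  have hμU : 0 < μ U := open_pos hd μ hinv U hUopen hUne
  set c : ℝ := (μ U).toReal with hc
  have hc_pos : 0 < c := ENNReal.toReal_pos hμU.ne' (measure_ne_top μ U)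
  -- positivity of the total sum
  have hsum_pos : 0 < ∑ ℓ, f ℓ :=
    Finset.sum_pos (fun ℓ _ => hf ℓ) Finset.univ_nonempty
  set B : ℝ := (∑ ℓ, f ℓ) / (f ℓ₀ * c) with hB
  have hB_pos : 0 < B := div_pos hsum_pos (mul_pos (hf ℓ₀) hc_pos)
  set x : ℝ := Real.sqrt (2 * B) with hx
  have hx0 : 0 ≤ x := Real.sqrt_nonneg _
  have hx2 : x ^ 2 = 2 * B := Real.sq_sqrt (by positivity)
  have heq := h x hx0
  -- the integrands
  set g : Fin L → (Metric.sphere (0 : EuclideanSpace ℝ (Fin d)) 1) → ℝ :=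
    fun ℓ P => Real.exp (x ^ 2 *
      (1 - (minv ℓ / σ ^ 2) * (inner ℝ (P : EuclideanSpace ℝ (Fin d)) khat : ℝ) ^ 2)) with hg
  have hg_cont : ∀ ℓ, Continuous (g ℓ) := by
    intro ℓ
    apply Real.continuous_exp.comp
    apply Continuous.mul continuous_const
    apply Continuous.sub continuous_const
    apply Continuous.mul continuous_const
    exact ((continuous_subtype_val.inner continuous_const)).pow 2
  have hg_int : ∀ ℓ, Integrable (g ℓ) μ := fun ℓ =>
    (hg_cont ℓ).integrable_of_hasCompactSupport (HasCompactSupport.of_compactSpace _)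
  have hg_nonneg : ∀ ℓ P, 0 ≤ g ℓ P := fun ℓ P => (Real.exp_pos _).le
  -- each term nonnegative
  have hterm_nonneg : ∀ ℓ : Fin L, 0 ≤ f ℓ * ∫ P, g ℓ P ∂μ := fun ℓ =>
    mul_nonneg (hf ℓ).le (integral_nonneg (hg_nonneg ℓ))
  -- lower bound on the ℓ₀ integral
  have hI0 : Real.exp (x ^ 2 * (1/2)) * c ≤ ∫ P, g ℓ₀ P ∂μ := by
    have h1 : ∫ P in U, g ℓ₀ P ∂μ ≤ ∫ P, g ℓ₀ P ∂μ :=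
      setIntegral_le_integral (hg_int ℓ₀) (Eventually.of_forall (hg_nonneg ℓ₀))
    have h2 : ∫ P in U, Real.exp (x ^ 2 * (1/2)) ∂μ ≤ ∫ P in U, g ℓ₀ P ∂μ := by
      apply setIntegral_mono_on (integrableOn_const (measure_lt_top μ U).ne)
        ((hg_int ℓ₀).integrableOn) hUopen.measurableSet
      intro P hP
      apply Real.exp_le_exp.mpr
      apply mul_le_mul_of_nonneg_left _ (sq_nonneg x)
      have : a * (inner ℝ (P : EuclideanSpace ℝ (Fin d)) khat : ℝ) ^ 2 < 1/2 := hP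
      linarith
    have h3 : ∫ P in U, Real.exp (x ^ 2 * (1/2)) ∂μ = c * Real.exp (x ^ 2 * (1/2)) := by
      rw [setIntegral_const, smul_eq_mul]; rfl
    linarith [h1, h2, h3.symm.le]
  -- chain of inequalities
  have hge : f ℓ₀ * ∫ P, g ℓ₀ P ∂μ ≤ ∑ ℓ, f ℓ * ∫ P, g ℓ P ∂μ :=
    Finset.single_le_sum (fun ℓ _ => hterm_nonneg ℓ) (Finset.mem_univ ℓ₀)
  have hkey : f ℓ₀ * (Real.exp (x ^ 2 * (1/2)) * c) ≤ ∑ ℓ, f ℓ := by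
    rw [heq]
    exact le_trans (mul_le_mul_of_nonneg_left hI0 (hf ℓ₀).le) hge
  have hexp : B < Real.exp (x ^ 2 * (1/2)) := by
    have : x ^ 2 * (1/2) = B := by rw [hx2]; ring
    rw [this]
    exact lt_of_lt_of_le (lt_add_one B) (Real.add_one_le_exp B)
  have hfin : ∑ ℓ, f ℓ < f ℓ₀ * (Real.exp (x ^ 2 * (1/2)) * c) := by
    have hfc : f ℓ₀ * c ≠ 0 := (mul_pos (hf ℓ₀) hc_pos).ne'
    have : f ℓ₀ * (B * c) = ∑ ℓ, f ℓ := by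
      rw [hB]
      rw [show f ℓ₀ * ((∑ ℓ, f ℓ) / (f ℓ₀ * c) * c) =
        (∑ ℓ, f ℓ) * (f ℓ₀ * c) / (f ℓ₀ * c) by ring]
      exact mul_div_cancel_right₀ _ hfc
    calc ∑ ℓ, f ℓ = f ℓ₀ * (B * c) := this.symm
      _ < f ℓ₀ * (Real.exp (x ^ 2 * (1/2)) * c) := by
          apply mul_lt_mul_of_pos_left _ (hf ℓ₀)
          exact mul_lt_mul_of_pos_right hexp hc_pos
  linarith
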